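/- Let K be a simplicial complex and S ⊆ K. Then S is a cosimplicial complex if and only if S is the difference of two sets open for K, and also if and only if S is the difference of two sets closed for K. -/
import Mathlib


open Finset

abbrev Simplex : Type := Finset ℕ
abbrev Cplx : Type := Finset (Finset ℕ)

/-- A simplicial complex: a finite set of nonempty finite sets closed under
taking nonempty subsets. -/
def IsSimpComplex (K : Cplx) : Prop :=
  (∀ τ ∈ K, τ.Nonempty) ∧ ∀ τ ∈ K, ∀ σ : Simplex, σ ⊆ τ → σ.Nonempty → σ ∈ K

/-- A cosimplicial complex: for all σ, τ ∈ S, every ν with σ ⊆ ν ⊆ τ is in S. -/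
def IsCosimplicial (S : Cplx) : Prop :=
  ∀ σ ∈ S, ∀ τ ∈ S, ∀ ν : Simplex, σ ⊆ ν → ν ⊆ τ → ν ∈ S

/-- S is open for K. -/
def IsOpenFor (K S : Cplx) : Prop :=
  S ⊆ K ∧ ∀ σ ∈ S, ∀ τ ∈ K, σ ⊆ τ → τ ∈ S

/-- S is closed for K. -/
def IsClosedFor (K S : Cplx) : Prop :=
  S ⊆ K ∧ IsSimpComplex S

/-- Closure of a finite set of simplexes: all nonempty subsets of members. -/
def cl (S : Cplx) : Cplx :=
  S.biUnion fun τ => τ.powerset.filter fun σ => σ.Nonempty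

/-- (σ, τ) is a free pair for K: τ is the only face of K properly containing σ. -/
def IsFreePair (K : Cplx) (σ τ : Simplex) : Prop :=
  σ ∈ K ∧ τ ∈ K ∧ σ ⊂ τ ∧ ∀ ρ ∈ K, σ ⊂ ρ → ρ = τ

/-- K' is an elementary expansion of K. -/
def ElemExpansion (K' K : Cplx) : Prop :=
  ∃ σ τ : Simplex, σ ∉ K ∧ τ ∉ K ∧ K' = K ∪ {σ, τ} ∧ IsFreePair K' σ τ

/-- K' is an elementary filling of K: K' = K ∪ {ν} with ν a facet of K'. -/
def ElemFilling (K' K : Cplx) : Prop :=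
  ∃ ν : Simplex, ν ∉ K ∧ K' = insert ν K ∧ ∀ ρ ∈ K', ν ⊆ ρ → ρ = ν

/-- A collapses onto B: a sequence of elementary collapses from A to B. -/
def Collapses (A B : Cplx) : Prop :=
  Relation.ReflTransGen (fun X Y : Cplx => ElemExpansion X Y) A B

/-- A Morse sequence from L to K, as W 0, …, W k, consisting of simplicial
complexes, each step an elementary expansion or an elementary filling. -/
def MorseSeq (L K : Cplx) (k : ℕ) (W : ℕ → Cplx) : Prop :=
  W 0 = L ∧ W k = K ∧ (∀ i ≤ k, IsSimpComplex (W i)) ∧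
  ∀ i < k, ElemExpansion (W (i+1)) (W i) ∨ ElemFilling (W (i+1)) (W i)

/-- F is a stack on S: monotone with respect to inclusion. -/
def IsStackOn (S : Cplx) (F : Simplex → ℤ) : Prop :=
  ∀ σ ∈ S, ∀ τ ∈ S, σ ⊆ τ → F σ ≤ F τ

/-- (σ, τ) is a regular pair of the Morse sequence W (of length k). -/
def RegularPair (k : ℕ) (W : ℕ → Cplx) (σ τ : Simplex) : Prop :=
  ∃ i < k, σ ∉ W i ∧ τ ∉ W i ∧ W (i+1) = W i ∪ {σ, τ} ∧ IsFreePair (W (i+1)) σ τ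

/-- An F-sequence: a Morse sequence whose regular pairs satisfy F σ = F τ. -/
def FSeq (F : Simplex → ℤ) (L K : Cplx) (k : ℕ) (W : ℕ → Cplx) : Prop :=
  MorseSeq L K k W ∧ ∀ σ τ : Simplex, RegularPair k W σ τ → F σ = F τ

/-- A flooding sequence: an F-sequence from ∅ to K such that F σ ≤ F τ whenever
σ ∈ K_i and τ ∈ K_j appears strictly later (τ ∉ K_i), with i < j. -/
def Flooding (F : Simplex → ℤ) (K : Cplx) (k : ℕ) (W : ℕ → Cplx) : Prop :=
  FSeq F ∅ K k W ∧
  ∀ i j : ℕ, i < j → j ≤ k → ∀ σ ∈ W i, ∀ τ ∈ W j, τ ∉ W i → F σ ≤ F τ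

/-- Coboundary δ(ν, S) of ν in S. -/
def cob (S : Cplx) (ν : Simplex) : Cplx :=
  S.filter fun μ => ν ⊆ μ ∧ μ.card = ν.card + 1

/-- Boundary ∂(ν, S) of ν in S. -/
def bdry (S : Cplx) (ν : Simplex) : Cplx :=
  S.filter fun η => η ⊆ ν ∧ η.card + 1 = ν.card

theorem cosimplicial_iff_diff_open_and_iff_diff_closed (K S : Cplx)
    (hK : IsSimpComplex K) (hS : S ⊆ K) :
    (IsCosimplicial S ↔ ∃ U V : Cplx, IsOpenFor K U ∧ IsOpenFor K V ∧ S = U \ V) ∧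
    (IsCosimplicial S ↔ ∃ C D : Cplx, IsClosedFor K C ∧ IsClosedFor K D ∧ S = C \ D) := by
  constructor
  · constructor
    · intro hco
      refine ⟨K.filter (fun τ => ∃ σ ∈ S, σ ⊆ τ),
        K.filter (fun τ => (∃ σ ∈ S, σ ⊆ τ) ∧ τ ∉ S), ?_, ?_, ?_⟩
      · refine ⟨filter_subset _ _, ?_⟩
        intro σ hσ τ hτ hsub
        simp only [mem_filter] at hσ ⊢
        obtain ⟨_, ρ, hρ, hρσ⟩ := hσ
        exact ⟨hτ, ρ, hρ, hρσ.trans hsub⟩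
      · refine ⟨filter_subset _ _, ?_⟩
        intro σ hσ τ hτ hsub
        simp only [mem_filter] at hσ ⊢
        obtain ⟨_, ⟨ρ, hρ, hρσ⟩, hσS⟩ := hσ
        refine ⟨hτ, ⟨ρ, hρ, hρσ.trans hsub⟩, fun hτS => hσS ?_⟩
        exact hco ρ hρ τ hτS σ hρσ hsub
      · ext ν
        simp only [mem_sdiff, mem_filter]
        constructor
        · intro hν
          exact ⟨⟨hS hν, ν, hν, subset_rfl⟩, fun h => h.2.2 hν⟩
        · rintro ⟨⟨hνK, hex⟩, h2⟩
          by_contra hνS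
          exact h2 ⟨hνK, hex, hνS⟩
    · rintro ⟨U, V, hU, hV, rfl⟩
      intro σ hσ τ hτ ν hσν hντ
      rw [mem_sdiff] at hσ hτ ⊢
      have hνK : ν ∈ K := (hK.2 τ (hU.1 hτ.1) ν hντ
        ((hK.1 σ (hU.1 hσ.1)).mono hσν))
      refine ⟨hU.2 σ hσ.1 ν hνK hσν, fun hνV => hτ.2 ?_⟩
      exact hV.2 ν hνV τ (hU.1 hτ.1) hντ
  · constructor
    · intro hco
      refine ⟨cl S, (cl S).filter (fun τ => τ ∉ S), ?_, ?_, ?_⟩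
      · refine ⟨?_, fun τ hτ => ?_, ?_⟩
        · intro τ hτ
          simp only [cl, mem_biUnion, mem_filter, mem_powerset] at hτ
          obtain ⟨ρ, hρ, hτρ, hne⟩ := hτ
          exact hK.2 ρ (hS hρ) τ hτρ hne
        · simp only [cl, mem_biUnion, mem_filter, mem_powerset] at hτ
          exact hτ.choose_spec.2.2
        · intro τ hτ σ hστ hne
          simp only [cl, mem_biUnion, mem_filter, mem_powerset] at hτ ⊢
          obtain ⟨ρ, hρ, hτρ, _⟩ := hτ
          exact ⟨ρ, hρ, hστ.trans hτρ, hne⟩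
      · refine ⟨?_, fun τ hτ => ?_, ?_⟩
        · intro τ hτ
          simp only [cl, mem_filter, mem_biUnion, mem_powerset] at hτ
          obtain ⟨⟨ρ, hρ, hτρ, hne⟩, _⟩ := hτ
          exact hK.2 ρ (hS hρ) τ hτρ hne
        · simp only [cl, mem_filter, mem_biUnion, mem_powerset] at hτ
          exact hτ.1.choose_spec.2.2
        · intro τ hτ σ hστ hne
          simp only [cl, mem_filter, mem_biUnion, mem_powerset] at hτ ⊢
          obtain ⟨⟨ρ, hρ, hτρ, _⟩, hτS⟩ := hτ
          refine ⟨⟨ρ, hρ, hστ.trans hτρ, hne⟩, fun hσS => hτS ?_⟩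
          exact hco σ hσS ρ hρ τ hστ hτρ
      · ext ν
        simp only [mem_sdiff, mem_filter]
        constructor
        · intro hν
          have hcl : ν ∈ cl S := by
            simp only [cl, mem_biUnion, mem_filter, mem_powerset]
            exact ⟨ν, hν, subset_rfl, hK.1 ν (hS hν)⟩
          exact ⟨hcl, fun h => h.2 hν⟩
        · rintro ⟨h1, h2⟩
          by_contra hνS
          exact h2 ⟨h1, hνS⟩
    · rintro ⟨C, D, hC, hD, rfl⟩
      intro σ hσ τ hτ ν hσν hντ
      rw [mem_sdiff] at hσ hτ ⊢
      have hνne : ν.Nonempty := (hC.2.1 σ hσ.1).mono hσν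
      refine ⟨hC.2.2 τ hτ.1 ν hντ hνne, fun hνD => hσ.2 ?_⟩
      exact hD.2.2 ν hνD σ hσν (hC.2.1 σ hσ.1)
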